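/- arXiv:2303.09396 — 4 statements merged into one kernel-verified Lean document; each statement's English description precedes it below -/
import Mathlib

section
/- Let {λ_n} be nonzero complex numbers with Re(λ_n) ≥ β₀|λ_n| for all n (0 < β₀ < 1) and ∑ 1/|λ_n| < ∞, and let Θ(t) = ∑_{n≥1} e^{-λ_n t}. Then for every x ≥ 0 and k ∈ ℕ, ∑_{n≥1} k!/(x+λ_n)^{k+1} = ∫_0^∞ e^{-xt} t^k Θ(t) dt, both sides converging absolutely. -/
open MeasureTheory Set Filter Topology
open scoped ENNReal NNReal

lemma R1 {c : ℝ} (hc : 0 < c) (k : ℕ) :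
    IntegrableOn (fun t : ℝ => t ^ k * Real.exp (-c * t)) (Set.Ioi 0) := by
  have := integrableOn_rpow_mul_exp_neg_mul_rpow (s := (k : ℝ)) (p := 1) (b := c)
    (by exact_mod_cast neg_one_lt_zero.trans_le (Nat.cast_nonneg k)) one_pos hc
  refine this.congr_fun (fun t ht => ?_) measurableSet_Ioi
  simp only [Real.rpow_natCast, Real.rpow_one]

lemma R2 {c : ℝ} (hc : 0 < c) (k : ℕ) :
    ∫ t in Set.Ioi (0:ℝ), t ^ k * Real.exp (-c * t) = (Nat.factorial k : ℝ) / c ^ (k + 1) := by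
  have h := Real.integral_rpow_mul_exp_neg_mul_Ioi (a := (k : ℝ) + 1) (r := c)
    (by positivity) hc
  rw [show ((k : ℝ) + 1 - 1) = (k : ℝ) by ring] at h
  have h2 : ∫ t in Set.Ioi (0:ℝ), t ^ k * Real.exp (-c * t)
      = ∫ t in Set.Ioi (0:ℝ), t ^ ((k : ℝ)) * Real.exp (-(c * t)) := by
    refine setIntegral_congr_fun measurableSet_Ioi (fun t ht => ?_)
    rw [Real.rpow_natCast, neg_mul]
  rw [h2, h, Real.Gamma_nat_eq_factorial, show ((k:ℝ) + 1) = ((k+1 : ℕ) : ℝ) by push_cast; ring,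
    Real.rpow_natCast, div_pow, one_pow]
  ring

lemma normA {s : ℂ} (k : ℕ) (t : ℝ) (ht : 0 < t) :
    ‖(t:ℂ) ^ k * Complex.exp (-s * t)‖ = t ^ k * Real.exp (-s.re * t) := by
  rw [norm_mul, norm_pow]
  simp only [Complex.norm_exp, Complex.norm_real, Real.norm_eq_abs, abs_of_pos ht]
  congr 1
  simp [Complex.mul_re]

lemma A1 {s : ℂ} (hs : 0 < s.re) (k : ℕ) :
    IntegrableOn (fun t : ℝ => (t:ℂ) ^ k * Complex.exp (-s * t)) (Set.Ioi 0) := by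
  refine Integrable.mono' (R1 hs k) ?_ ?_
  · exact (Continuous.aestronglyMeasurable (by continuity)).restrict
  · filter_upwards [ae_restrict_mem measurableSet_Ioi] with t ht
    rw [normA k t ht]

lemma TD {s : ℂ} (hs : 0 < s.re) (k : ℕ) :
    Tendsto (fun t : ℝ => (t:ℂ) ^ k * Complex.exp (-s * t)) atTop (𝓝 0) := by
  rw [tendsto_zero_iff_norm_tendsto_zero]
  have h := tendsto_rpow_mul_exp_neg_mul_atTop_nhds_zero (k : ℝ) s.re hs
  refine h.congr' ?_
  filter_upwards [eventually_gt_atTop 0] with t ht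
  rw [normA k t ht, Real.rpow_natCast]

lemma hd {s : ℂ} (k : ℕ) (t : ℝ) :
    HasDerivAt (fun u : ℝ => -s⁻¹ * ((u:ℂ) ^ (k+1) * Complex.exp (-s * u)))
      (-s⁻¹ * (((k:ℂ)+1) * (t:ℂ) ^ k * Complex.exp (-s * t)
        + (t:ℂ) ^ (k+1) * (Complex.exp (-s * t) * -s))) t := by
  have hpow : HasDerivAt (fun z : ℂ => z ^ (k+1)) (((k:ℂ)+1) * (t:ℂ) ^ k) (t:ℂ) := by
    simpa using hasDerivAt_pow (k+1) (t:ℂ)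
  have hexp : HasDerivAt (fun z : ℂ => Complex.exp (-s * z))
      (Complex.exp (-s * t) * -s) (t:ℂ) := by
    have := ((hasDerivAt_id (t:ℂ)).const_mul (-s)).cexp
    simpa [mul_comm] using this
  exact ((hpow.mul hexp).const_mul (-s⁻¹)).comp_ofReal

lemma A2base {s : ℂ} (hs : 0 < s.re) :
    ∫ t in Set.Ioi (0:ℝ), Complex.exp (-s * t) = 1 / s := by
  have hs0 : s ≠ 0 := fun h => by simp [h] at hs
  have hder : ∀ t : ℝ, HasDerivAt (fun u : ℝ => -s⁻¹ * Complex.exp (-s * u))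
      (Complex.exp (-s * t)) t := by
    intro t
    have hexp : HasDerivAt (fun z : ℂ => Complex.exp (-s * z))
        (Complex.exp (-s * t) * -s) (t:ℂ) := by
      have := ((hasDerivAt_id (t:ℂ)).const_mul (-s)).cexp
      simpa [mul_comm] using this
    have := (hexp.const_mul (-s⁻¹)).comp_ofReal
    convert this using 1
    field_simp
  have hint : IntegrableOn (fun t : ℝ => Complex.exp (-s * t)) (Set.Ioi 0) := by
    have := A1 hs 0
    simpa using this
  have htd : Tendsto (fun t : ℝ => -s⁻¹ * Complex.exp (-s * t)) atTop (𝓝 0) := by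
    have := (TD hs 0).const_mul (-s⁻¹)
    simpa using this
  have key := integral_Ioi_of_hasDerivAt_of_tendsto' (fun t _ => hder t) hint htd
  rw [key]
  simp [Complex.exp_zero]

lemma A2step {s : ℂ} (hs : 0 < s.re) (k : ℕ) :
    ∫ t in Set.Ioi (0:ℝ), (t:ℂ) ^ (k+1) * Complex.exp (-s * t)
      = (((k:ℂ)+1) / s) * ∫ t in Set.Ioi (0:ℝ), (t:ℂ) ^ k * Complex.exp (-s * t) := by
  have hs0 : s ≠ 0 := fun h => by simp [h] at hs
  have hder : ∀ t : ℝ, HasDerivAt (fun u : ℝ => -s⁻¹ * ((u:ℂ) ^ (k+1) * Complex.exp (-s * u)))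
      ((t:ℂ) ^ (k+1) * Complex.exp (-s * t)
        - (((k:ℂ)+1) / s) * ((t:ℂ) ^ k * Complex.exp (-s * t))) t := by
    intro t
    convert hd k t using 1
    field_simp
    ring
  have hint : IntegrableOn (fun t : ℝ => (t:ℂ) ^ (k+1) * Complex.exp (-s * t)
      - (((k:ℂ)+1) / s) * ((t:ℂ) ^ k * Complex.exp (-s * t))) (Set.Ioi 0) :=
    (A1 hs (k+1)).sub ((A1 hs k).const_mul _)
  have htd : Tendsto (fun t : ℝ => -s⁻¹ * ((t:ℂ) ^ (k+1) * Complex.exp (-s * t)))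
      atTop (𝓝 0) := by
    have := (TD hs (k+1)).const_mul (-s⁻¹)
    simpa using this
  have key := integral_Ioi_of_hasDerivAt_of_tendsto' (fun t _ => hder t) hint htd
  rw [integral_sub (A1 hs (k+1)) ((A1 hs k).const_mul _)] at key
  rw [integral_const_mul] at key
  have h0 : ((0:ℝ):ℂ) ^ (k+1) = 0 := by simp
  rw [h0] at key
  simp only [mul_zero, zero_mul, zero_sub, neg_zero, sub_eq_zero, mul_zero] at key
  simpa using key

lemma A2 {s : ℂ} (hs : 0 < s.re) : ∀ k : ℕ,
    ∫ t in Set.Ioi (0:ℝ), (t:ℂ) ^ k * Complex.exp (-s * t)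
      = (Nat.factorial k : ℂ) / s ^ (k + 1) := by
  have hs0 : s ≠ 0 := fun h => by simp [h] at hs
  intro k
  induction k with
  | zero => simpa using A2base hs
  | succ k ih =>
      rw [A2step hs k, ih, Nat.factorial_succ]
      push_cast
      rw [div_mul_div_comm, ← pow_succ']

lemma A3 {s : ℂ} (hs : 0 < s.re) (k : ℕ) :
    ∫ t in Set.Ioi (0:ℝ), ‖(t:ℂ) ^ k * Complex.exp (-s * t)‖
      = (Nat.factorial k : ℝ) / s.re ^ (k + 1) := by
  rw [← R2 hs k]
  exact setIntegral_congr_fun measurableSet_Ioi (fun t ht => normA k t ht)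

lemma integrable_tsum' {α : Type*} [MeasurableSpace α] {μ : Measure α} {F : ℕ → α → ℂ}
    (hF : ∀ n, Integrable (F n) μ) (hsum : Summable fun n => ∫ a, ‖F n a‖ ∂μ) :
    Integrable (fun a => ∑' n, F n a) μ := by
  have heq : ∀ n, ∫⁻ a, ‖F n a‖₊ ∂μ = ENNReal.ofReal (∫ a, ‖F n a‖ ∂μ) := fun n =>
    (ofReal_integral_norm_eq_lintegral_enorm (hF n)).symm
  have hlin : (∑' n, ∫⁻ a, ‖F n a‖₊ ∂μ) ≠ ⊤ := by
    simp_rw [heq]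
    rw [← ENNReal.ofReal_tsum_of_nonneg (fun n => integral_nonneg fun a => norm_nonneg _) hsum]
    exact ENNReal.ofReal_ne_top
  have htot : (∫⁻ a, ∑' n, (‖F n a‖₊ : ℝ≥0∞) ∂μ) ≠ ⊤ := by
    simp only [← enorm_eq_nnnorm] at hlin ⊢
    rw [lintegral_tsum fun n => (hF n).aestronglyMeasurable.enorm]
    exact hlin
  have hae : ∀ᵐ a ∂μ, Summable fun n => ‖F n a‖₊ := by
    filter_upwards [ae_lt_top' (AEMeasurable.ennreal_tsum fun n => (hF n).aestronglyMeasurable.enorm) htot]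
      with a ha
    rw [← ENNReal.tsum_coe_ne_top_iff_summable]
    exact ha.ne
  have haesum : ∀ᵐ a ∂μ, Summable fun n => F n a := by
    filter_upwards [hae] with a ha
    exact Summable.of_norm (by simpa [← NNReal.summable_coe] using ha)
  constructor
  · refine aestronglyMeasurable_of_tendsto_ae atTop
      (f := fun N a => ∑ n ∈ Finset.range N, F n a)
      (fun N => Finset.aestronglyMeasurable_fun_sum _ fun i _ => (hF i).1) ?_
    filter_upwards [haesum] with a ha
    exact ha.hasSum.tendsto_sum_nat
  · refine lt_of_le_of_lt (lintegral_mono_ae ?_) htot.lt_top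
    filter_upwards [hae] with a ha
    calc (‖∑' n, F n a‖₊ : ℝ≥0∞) ≤ ((∑' n, ‖F n a‖₊ : ℝ≥0) : ℝ≥0∞) := by
          exact_mod_cast ENNReal.coe_le_coe.2 (nnnorm_tsum_le ha)
      _ = ∑' n, (‖F n a‖₊ : ℝ≥0∞) := ENNReal.coe_tsum ha

theorem stmt3 (lam : ℕ → ℂ) (hne : ∀ n, lam n ≠ 0)
    (β₀ : ℝ) (hβ₀ : 0 < β₀) (hβ₁ : β₀ < 1)
    (hre : ∀ n, β₀ * ‖lam n‖ ≤ (lam n).re)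
    (hsum : Summable fun n => 1 / ‖lam n‖)
    (Θ : ℝ → ℂ) (hΘ : ∀ t : ℝ, 0 < t → Θ t = ∑' n, Complex.exp (-lam n * t)) :
    ∀ x : ℝ, 0 ≤ x → ∀ k : ℕ,
      (Summable fun n => ‖(Nat.factorial k : ℂ) / (x + lam n) ^ (k + 1)‖) ∧
      Integrable (fun t : ℝ =>
        Complex.exp (-x * t) * (t : ℂ) ^ k * Θ t) (volume.restrict (Set.Ioi 0)) ∧
      (∑' n, (Nat.factorial k : ℂ) / (x + lam n) ^ (k + 1)) =
        ∫ t in Set.Ioi (0:ℝ), Complex.exp (-x * t) * (t : ℂ) ^ k * Θ t := by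
  intro x hx k
  set g : ℕ → ℝ → ℂ := fun n t => (t:ℂ) ^ k * Complex.exp (-((x:ℂ) + lam n) * t) with hg
  have habs0 : ∀ n, 0 < ‖lam n‖ := fun n => norm_pos_iff.mpr (hne n)
  have hrepos : ∀ n, 0 < ((x:ℂ) + lam n).re := by
    intro n
    rw [Complex.add_re, Complex.ofReal_re]
    nlinarith [hre n, habs0 n]
  have hble : ∀ n, β₀ * ‖lam n‖ ≤ ((x:ℂ) + lam n).re := by
    intro n
    rw [Complex.add_re, Complex.ofReal_re]
    linarith [hre n]
  have habsle : ∀ n, β₀ * ‖lam n‖ ≤ ‖(x:ℂ) + lam n‖ :=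
    fun n => (hble n).trans (Complex.re_le_norm _)
  -- master summable bound
  have hS : Summable (fun n => (Nat.factorial k : ℝ) / (β₀ * ‖lam n‖) ^ (k+1)) := by
    have h1 : ∀ᶠ n in atTop, 1 ≤ ‖lam n‖ := by
      have h2 : ∀ᶠ n in atTop, 1 / ‖lam n‖ < 1 :=
        hsum.tendsto_atTop_zero.eventually_lt_const one_pos
      filter_upwards [h2] with n hn
      have := habs0 n
      rw [div_lt_iff₀ this, one_mul] at hn
      exact hn.le
    refine Summable.of_norm_bounded_eventually_nat
      (g := fun n => ((Nat.factorial k : ℝ) / β₀ ^ (k+1)) * (1 / ‖lam n‖))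
      (hsum.mul_left _) ?_
    filter_upwards [h1] with n hn
    have h3 : ‖lam n‖ ≤ ‖lam n‖ ^ (k+1) :=
      le_self_pow₀ hn (Nat.succ_ne_zero k)
    rw [Real.norm_eq_abs, abs_of_nonneg (by positivity), mul_pow, div_mul_div_comm, mul_one]
    have hb1 : β₀ ^ (k+1) * ‖lam n‖ ≤ β₀ ^ (k+1) * ‖lam n‖ ^ (k+1) := by
      have := habs0 n
      gcongr
    refine div_le_div_of_nonneg_left (by positivity) ?_ hb1
    have := habs0 n
    positivity
  have hgint : ∀ n, IntegrableOn (g n) (Set.Ioi 0) volume := fun n => A1 (hrepos n) k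
  have hnorm_eq : ∀ n, (∫ t in Set.Ioi (0:ℝ), ‖g n t‖) =
      (Nat.factorial k : ℝ) / (((x:ℂ) + lam n).re) ^ (k+1) := fun n => A3 (hrepos n) k
  have hgsum : Summable fun n => ∫ t in Set.Ioi (0:ℝ), ‖g n t‖ := by
    simp_rw [hnorm_eq]
    refine hS.of_nonneg_of_le (fun n => by have := hrepos n; positivity) fun n => ?_
    refine div_le_div_of_nonneg_left (by positivity) ?_ ?_
    · have := habs0 n
      positivity
    · exact pow_le_pow_left₀ (by have := habs0 n; positivity) (hble n) _
  have hsum1 : Summable fun n => ‖(Nat.factorial k : ℂ) / (x + lam n) ^ (k + 1)‖ := by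
    refine hS.of_nonneg_of_le (fun n => norm_nonneg _) fun n => ?_
    rw [norm_div, norm_pow, Complex.norm_natCast]
    refine div_le_div_of_nonneg_left (by positivity) ?_ ?_
    · have := habs0 n
      positivity
    · exact pow_le_pow_left₀ (by have := habs0 n; positivity) (habsle n) _
  have hcongr : (fun t : ℝ => Complex.exp (-x*t) * (t:ℂ)^k * Θ t)
      =ᵐ[volume.restrict (Set.Ioi 0)] (fun t => ∑' n, g n t) := by
    filter_upwards [ae_restrict_mem measurableSet_Ioi] with t ht
    rw [hΘ t ht, ← tsum_mul_left]
    refine tsum_congr fun n => ?_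
    simp only [hg]
    rw [show -((x:ℂ)+lam n)*(t:ℂ) = (-(x:ℂ)*t) + (-lam n*t) by push_cast; ring, Complex.exp_add]
    ring
  refine ⟨hsum1, (integrable_tsum' hgint hgsum).congr hcongr.symm, ?_⟩
  calc (∑' n, (Nat.factorial k : ℂ) / (x + lam n) ^ (k + 1))
      = ∑' n, ∫ t in Set.Ioi (0:ℝ), g n t := tsum_congr fun n => (A2 (hrepos n) k).symm
    _ = ∫ t in Set.Ioi (0:ℝ), ∑' n, g n t :=
        integral_tsum_of_summable_integral_norm hgint hgsum
    _ = _ := integral_congr_ae hcongr.symm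
end

section
/- Let {λ_n} be nonzero complex numbers with Re(λ_n) ≥ β₀|λ_n| for all n (0 < β₀ < 1), ∑ 1/|λ_n|^{α₀} < ∞ for some α₀ ∈ (0,1), and let Θ(t) = ∑_{n≥1} e^{-λ_n t}. If 0 < β < β₀·inf_n |λ_n|, then for each k ∈ ℕ the k-th derivative Θ^{(k)}(t) satisfies Θ^{(k)}(t) = O(e^{-βt}) as t → +∞. -/
open Filter Asymptotics

theorem stmt5 (lam : ℕ → ℂ) (hne : ∀ n, lam n ≠ 0)
    (β₀ α₀ : ℝ) (hβ₀ : 0 < β₀) (hβ₁ : β₀ < 1) (hα₀ : 0 < α₀) (hα₁ : α₀ < 1)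
    (hre : ∀ n, β₀ * ‖lam n‖ ≤ (lam n).re)
    (hsum : Summable fun n => ‖lam n‖ ^ (-α₀))
    (β : ℝ) (hβ : 0 < β) (hβlt : β < β₀ * ⨅ n, ‖lam n‖) :
    ∀ k : ℕ,
      (fun t : ℝ => ∑' n, (-lam n) ^ k * Complex.exp (-lam n * t)) =O[atTop]
        fun t : ℝ => Real.exp (-β * t) := by
  intro k
  obtain ⟨m, hm⟩ : ∃ m, m = ⨅ n, ‖lam n‖ := ⟨_, rfl⟩
  rw [← hm] at hβlt
  have hbdd : BddBelow (Set.range fun n => ‖lam n‖) :=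
    ⟨0, by rintro x ⟨n, rfl⟩; exact norm_nonneg _⟩
  have hmle : ∀ n, m ≤ ‖lam n‖ := fun n => hm ▸ ciInf_le hbdd n
  have hm0 : 0 < m := by nlinarith [hβ.trans hβlt]
  obtain ⟨c, hc⟩ : ∃ c, c = β₀ - β / m := ⟨_, rfl⟩
  have hc0 : 0 < c := by
    rw [hc]
    exact sub_pos.2 ((div_lt_iff₀ hm0).2 hβlt)
  obtain ⟨C, hC⟩ : ∃ C, C = (Nat.factorial (k+1) : ℝ) / c ^ (k + 1) * m ^ (α₀ - 1) :=
    ⟨_, rfl⟩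
  have hC0 : 0 ≤ C := by rw [hC]; positivity
  have key : ∀ x : ℝ, m ≤ x → x ^ k * Real.exp (-(c * x)) ≤ C * x ^ (-α₀) := by
    intro x hx
    have hx0 : 0 < x := lt_of_lt_of_le hm0 hx
    have h1 : (c * x) ^ (k + 1) / (Nat.factorial (k+1) : ℝ) ≤ Real.exp (c * x) :=
      Real.pow_div_factorial_le_exp (c * x) (by positivity) (k + 1)
    have hfac : (0:ℝ) < (Nat.factorial (k+1) : ℝ) := by positivity
    have h2 : x ^ k * Real.exp (-(c * x)) ≤ (Nat.factorial (k+1) : ℝ) / c ^ (k + 1) * x⁻¹ := by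
      rw [Real.exp_neg]
      have hlhs : (c * x) ^ (k + 1) / (Nat.factorial (k+1) : ℝ) ≤ Real.exp (c * x) := h1
      have hex : 0 < Real.exp (c * x) := Real.exp_pos _
      have hq : 0 < (c * x) ^ (k + 1) := by positivity
      have hinv : (Real.exp (c * x))⁻¹ ≤ (Nat.factorial (k+1) : ℝ) / (c * x) ^ (k + 1) := by
        rw [le_div_iff₀ hq]
        rw [div_le_iff₀ hfac] at h1
        calc (Real.exp (c * x))⁻¹ * (c * x) ^ (k + 1)
            ≤ (Real.exp (c * x))⁻¹ * (Real.exp (c * x) * (Nat.factorial (k+1) : ℝ)) := by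
              gcongr
          _ = (Nat.factorial (k+1) : ℝ) := by field_simp
      calc x ^ k * (Real.exp (c * x))⁻¹
          ≤ x ^ k * ((Nat.factorial (k+1) : ℝ) / (c * x) ^ (k + 1)) := by
            gcongr
          _ = (Nat.factorial (k+1) : ℝ) / c ^ (k + 1) * x⁻¹ := by
            rw [mul_pow]
            field_simp
            ring
    have h3 : x⁻¹ ≤ m ^ (α₀ - 1) * x ^ (-α₀) := by
      have hle : x ^ (α₀ - 1) ≤ m ^ (α₀ - 1) :=
        Real.rpow_le_rpow_of_nonpos hm0 hx (by linarith)
      calc x⁻¹ = x ^ (-1 : ℝ) := (Real.rpow_neg_one x).symm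
          _ = x ^ (α₀ - 1 + -α₀) := by congr 1; ring
          _ = x ^ (α₀ - 1) * x ^ (-α₀) := Real.rpow_add hx0 _ _
          _ ≤ m ^ (α₀ - 1) * x ^ (-α₀) := by gcongr
    calc x ^ k * Real.exp (-(c * x)) ≤ (Nat.factorial (k+1) : ℝ) / c ^ (k + 1) * x⁻¹ := h2
      _ ≤ (Nat.factorial (k+1) : ℝ) / c ^ (k + 1) * (m ^ (α₀ - 1) * x ^ (-α₀)) := by
          gcongr
      _ = C * x ^ (-α₀) := by rw [hC]; ring
  have term_bound : ∀ (t : ℝ), 1 ≤ t → ∀ n,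
      ‖(-lam n) ^ k * Complex.exp (-lam n * t)‖ ≤
        C * Real.exp (-β * t) * ‖lam n‖ ^ (-α₀) := by
    intro t ht n
    obtain ⟨a, ha⟩ : ∃ a, a = ‖lam n‖ := ⟨_, rfl⟩
    rw [← ha]
    have ha0 : 0 < a := ha ▸ norm_pos_iff.2 (hne n)
    have ham : m ≤ a := ha ▸ hmle n
    have hrea : β₀ * a ≤ (lam n).re := ha ▸ hre n
    have hnorm : ‖(-lam n) ^ k * Complex.exp (-lam n * (t:ℂ))‖ =
        a ^ k * Real.exp (-(lam n).re * t) := by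
      rw [norm_mul, norm_pow, Complex.norm_exp]
      congr 2
      · rw [norm_neg, ha]
      · simp
    rw [hnorm]
    have hβ₀a : Real.exp (-(lam n).re * t) ≤ Real.exp (-(β₀ * a) * t) := by
      apply Real.exp_le_exp.2
      nlinarith
    have hsplit : Real.exp (-(β₀ * a) * t) ≤ Real.exp (-(c * a)) * Real.exp (-β * t) := by
      rw [← Real.exp_add]
      apply Real.exp_le_exp.2
      have h1 : β ≤ (β / m) * a := by
        rw [div_mul_eq_mul_div, le_div_iff₀ hm0]
        nlinarith
      have hca : 0 ≤ c * a := by positivity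
      have e1 : c * a ≤ c * a * t := le_mul_of_one_le_right hca ht
      have e2 : β * t ≤ (β / m) * a * t := by nlinarith
      have e3 : β₀ * a * t = c * a * t + (β / m) * a * t := by rw [hc]; ring
      nlinarith
    calc a ^ k * Real.exp (-(lam n).re * t)
        ≤ a ^ k * (Real.exp (-(c * a)) * Real.exp (-β * t)) := by
          gcongr
          exact hβ₀a.trans hsplit
      _ = (a ^ k * Real.exp (-(c * a))) * Real.exp (-β * t) := by ring
      _ ≤ (C * a ^ (-α₀)) * Real.exp (-β * t) :=
          mul_le_mul_of_nonneg_right (key a ham) (Real.exp_pos _).le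
      _ = C * Real.exp (-β * t) * a ^ (-α₀) := by ring
  have hmaj : ∀ t : ℝ, Summable fun n => C * Real.exp (-β * t) * ‖lam n‖ ^ (-α₀) :=
    fun t => hsum.mul_left _
  rw [isBigO_iff]
  refine ⟨C * ∑' n, ‖lam n‖ ^ (-α₀), eventually_atTop.2 ⟨1, fun t ht => ?_⟩⟩
  have hsummable : Summable fun n => ‖(-lam n) ^ k * Complex.exp (-lam n * (t:ℂ))‖ :=
    Summable.of_nonneg_of_le (fun n => norm_nonneg _) (term_bound t ht) (hmaj t)
  calc ‖∑' n, (-lam n) ^ k * Complex.exp (-lam n * (t:ℂ))‖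
      ≤ ∑' n, ‖(-lam n) ^ k * Complex.exp (-lam n * (t:ℂ))‖ :=
        norm_tsum_le_tsum_norm hsummable
    _ ≤ ∑' n, C * Real.exp (-β * t) * ‖lam n‖ ^ (-α₀) :=
        Summable.tsum_le_tsum (term_bound t ht) hsummable (hmaj t)
    _ = C * (∑' n, ‖lam n‖ ^ (-α₀)) * Real.exp (-β * t) := by
        rw [tsum_mul_left]; ring
    _ ≤ C * (∑' n, ‖lam n‖ ^ (-α₀)) * ‖Real.exp (-β * t)‖ := by
        rw [Real.norm_eq_abs, abs_of_pos (Real.exp_pos _)]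
end

section
/- Let {λ_n} be nonzero complex numbers with Re(λ_n) ≥ β₀|λ_n| (0 < β₀ < 1) and ∑ 1/|λ_n|^{α₀} < ∞ for some α₀ ∈ (0,1). Then for each k ∈ ℕ and each α with α₀ ≤ α < 1, the k-th derivative of Θ(t) = ∑ e^{-λ_n t} satisfies Θ^{(k)}(t) = O(t^{-α-k}) as t → 0⁺. -/
open Filter Asymptotics

lemma rpow_mul_exp_neg_le_aux (s : ℝ) (hs : 0 ≤ s) (n : ℕ) (hsn : s ≤ n) (x : ℝ) (hx : 0 ≤ x) :
    x ^ s * Real.exp (-x) ≤ n.factorial := by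
  have h1 : (1 : ℝ) ≤ n.factorial := by exact_mod_cast n.factorial_pos
  rcases le_or_gt x 1 with h | h
  · calc x ^ s * Real.exp (-x) ≤ 1 * 1 :=
        mul_le_mul (Real.rpow_le_one hx h hs)
          (Real.exp_le_one_iff.mpr (by linarith)) (Real.exp_nonneg _) zero_le_one
      _ ≤ n.factorial := by linarith
  · have hx1 : (1 : ℝ) ≤ x := h.le
    have h2 : x ^ s ≤ x ^ (n : ℝ) := Real.rpow_le_rpow_of_exponent_le hx1 hsn
    have h3 : x ^ (n : ℝ) = x ^ n := Real.rpow_natCast x n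
    have h4 : x ^ n ≤ n.factorial * Real.exp x := by
      have := Real.pow_div_factorial_le_exp (x := x) hx n
      have hfac : (0 : ℝ) < n.factorial := by exact_mod_cast n.factorial_pos
      calc x ^ n = (x ^ n / n.factorial) * n.factorial := by field_simp
        _ ≤ Real.exp x * n.factorial := by
            exact mul_le_mul_of_nonneg_right this hfac.le
        _ = n.factorial * Real.exp x := by ring
    calc x ^ s * Real.exp (-x) ≤ (n.factorial * Real.exp x) * Real.exp (-x) := by
          apply mul_le_mul_of_nonneg_right _ (Real.exp_nonneg _)
          rw [← h3] at h4; linarith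
      _ = n.factorial * (Real.exp x * Real.exp (-x)) := by ring
      _ = n.factorial := by rw [← Real.exp_add]; simp

lemma key_bound (β₀ α₀ t : ℝ) (hβ : 0 < β₀) (hα : 0 ≤ α₀) (hα1 : α₀ ≤ 1) (ht : 0 < t) (k : ℕ) (z : ℂ)
    (hz : z ≠ 0) (hre : β₀ * ‖z‖ ≤ z.re) :
    ‖(-z) ^ k * Complex.exp (-z * t)‖ ≤
      ‖z‖ ^ (-α₀) * ((k + 1).factorial * (β₀ * t) ^ (-(α₀ + k))) := by
  have hz0 : 0 < ‖z‖ := norm_pos_iff.mpr hz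
  set A := ‖z‖ with hA
  have hβt : 0 < β₀ * t := mul_pos hβ ht
  set x : ℝ := β₀ * t * A with hxdef
  have hx0 : 0 < x := mul_pos hβt hz0
  have hs0 : 0 ≤ α₀ + k := by positivity
  -- norm computation
  have hnorm : ‖(-z) ^ k * Complex.exp (-z * t)‖ = A ^ k * Real.exp (-(z.re * t)) := by
    rw [norm_mul, norm_pow, norm_neg, Complex.norm_exp]
    congr 2
    simp [Complex.mul_re]
  have hexp : Real.exp (-(z.re * t)) ≤ Real.exp (-x) := by
    apply Real.exp_le_exp.mpr
    have : β₀ * A * t ≤ z.re * t := mul_le_mul_of_nonneg_right hre ht.le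
    rw [hxdef]; nlinarith
  have step1 : ‖(-z) ^ k * Complex.exp (-z * t)‖ ≤ A ^ k * Real.exp (-x) := by
    rw [hnorm]
    exact mul_le_mul_of_nonneg_left hexp (by positivity)
  -- rewrite A^k * exp(-x)
  have hAk : A ^ k * Real.exp (-x) =
      A ^ (-α₀) * ((x ^ (α₀ + k) * Real.exp (-x)) * (β₀ * t) ^ (-(α₀ + k))) := by
    have hxpow : x ^ (α₀ + k) = (β₀ * t) ^ (α₀ + k) * A ^ (α₀ + k) :=
      Real.mul_rpow hβt.le hz0.le
    rw [hxpow]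
    rw [show (β₀ * t) ^ (α₀ + k) * A ^ (α₀ + k) * Real.exp (-x) * (β₀ * t) ^ (-(α₀ + k)) =
        ((β₀ * t) ^ (α₀ + k) * (β₀ * t) ^ (-(α₀ + k))) * (A ^ (α₀ + k) * Real.exp (-x)) by ring]
    rw [← Real.rpow_add hβt, add_neg_cancel, Real.rpow_zero, one_mul]
    rw [show A ^ (-α₀) * (A ^ (α₀ + k) * Real.exp (-x)) =
        (A ^ (-α₀) * A ^ (α₀ + k)) * Real.exp (-x) by ring]
    rw [← Real.rpow_add hz0]
    norm_num [Real.rpow_natCast]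
  have hxs : x ^ (α₀ + k) * Real.exp (-x) ≤ (k + 1).factorial :=
    rpow_mul_exp_neg_le_aux (α₀ + k) hs0 (k + 1) (by push_cast; linarith) x hx0.le
  calc ‖(-z) ^ k * Complex.exp (-z * t)‖ ≤ A ^ k * Real.exp (-x) := step1
    _ = A ^ (-α₀) * ((x ^ (α₀ + k) * Real.exp (-x)) * (β₀ * t) ^ (-(α₀ + k))) := hAk
    _ ≤ A ^ (-α₀) * ((k + 1).factorial * (β₀ * t) ^ (-(α₀ + k))) := by
        apply mul_le_mul_of_nonneg_left _ (Real.rpow_nonneg hz0.le _)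
        exact mul_le_mul_of_nonneg_right hxs (Real.rpow_nonneg hβt.le _)

theorem stmt6 (lam : ℕ → ℂ) (hne : ∀ n, lam n ≠ 0)
    (β₀ α₀ : ℝ) (hβ₀ : 0 < β₀) (hβ₁ : β₀ < 1) (hα₀ : 0 < α₀) (hα₁ : α₀ < 1)
    (hre : ∀ n, β₀ * ‖lam n‖ ≤ (lam n).re)
    (hsum : Summable fun n => ‖lam n‖ ^ (-α₀)) :
    ∀ k : ℕ, ∀ α : ℝ, α₀ ≤ α → α < 1 →
      (fun t : ℝ => ∑' n, (-lam n) ^ k * Complex.exp (-lam n * t)) =O[nhdsWithin 0 (Set.Ioi 0)]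
        fun t : ℝ => t ^ (-α - k) := by
  intro k α hαl hαu
  rw [isBigO_iff]
  set s : ℝ := α₀ + k with hs
  have hS0 : 0 ≤ ∑' n, ‖lam n‖ ^ (-α₀) :=
    tsum_nonneg fun n => Real.rpow_nonneg (norm_nonneg _) _
  refine ⟨(∑' n, ‖lam n‖ ^ (-α₀)) * ((k + 1).factorial * β₀ ^ (-s)), ?_⟩
  filter_upwards [Ioo_mem_nhdsGT_of_mem (show (0:ℝ) ∈ Set.Ico 0 1 by simp)] with t ht
  obtain ⟨ht0, ht1⟩ := ht
  have hkey : ∀ n, ‖(-lam n) ^ k * Complex.exp (-lam n * t)‖ ≤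
      ‖lam n‖ ^ (-α₀) * ((k + 1).factorial * (β₀ * t) ^ (-s)) := fun n =>
    key_bound β₀ α₀ t hβ₀ hα₀.le hα₁.le ht0 k (lam n) (hne n) (hre n)
  have hg : Summable fun n =>
      ‖lam n‖ ^ (-α₀) * ((k + 1).factorial * (β₀ * t) ^ (-s)) :=
    hsum.mul_right _
  have hf : Summable fun n => ‖(-lam n) ^ k * Complex.exp (-lam n * t)‖ :=
    Summable.of_nonneg_of_le (fun n => norm_nonneg _) hkey hg
  have hmr : (β₀ * t) ^ (-s) = β₀ ^ (-s) * t ^ (-s) := Real.mul_rpow hβ₀.le ht0.le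
  have hts : t ^ (-s) ≤ t ^ (-α - k) := by
    apply Real.rpow_le_rpow_of_exponent_ge ht0 ht1.le
    rw [hs]; linarith
  have hnr : ‖t ^ (-α - (k:ℝ))‖ = t ^ (-α - (k:ℝ)) := by
    rw [Real.norm_eq_abs, abs_of_pos (Real.rpow_pos_of_pos ht0 _)]
  calc ‖∑' n, (-lam n) ^ k * Complex.exp (-lam n * t)‖
      ≤ ∑' n, ‖(-lam n) ^ k * Complex.exp (-lam n * t)‖ := norm_tsum_le_tsum_norm hf
    _ ≤ ∑' n, ‖lam n‖ ^ (-α₀) * ((k + 1).factorial * (β₀ * t) ^ (-s)) :=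
        Summable.tsum_le_tsum hkey hf hg
    _ = (∑' n, ‖lam n‖ ^ (-α₀)) * ((k + 1).factorial * (β₀ * t) ^ (-s)) :=
        tsum_mul_right
    _ ≤ (∑' n, ‖lam n‖ ^ (-α₀)) * ((k + 1).factorial * β₀ ^ (-s)) *
          ‖t ^ (-α - (k:ℝ))‖ := by
        rw [hnr, hmr]
        rw [show (∑' n, ‖lam n‖ ^ (-α₀)) *
            ((k + 1).factorial * (β₀ ^ (-s) * t ^ (-s))) =
            ((∑' n, ‖lam n‖ ^ (-α₀)) * ((k + 1).factorial * β₀ ^ (-s))) * t ^ (-s)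
            by ring]
        apply mul_le_mul_of_nonneg_left hts
        positivity
end

section
/- Let {λ_n} be nonzero complex numbers with Re(λ_n) ≥ β₀|λ_n| (0 < β₀ < 1) and ∑ 1/|λ_n| < ∞, and suppose there exists a finite nonnegative measure ν on [0,1] with ∫_0^1 y dν(y) < ∞ such that f'(0) − f'(z)/f(z) = z ∫_1^∞ y dν(y⁻¹)/(y+z) for all z with Re(z) > 0, where f(z) = ∏(1+z/λ_n). Then ∫_1^∞ y dν(y⁻¹) ≤ |f'(0)| + (1/β₀) ∑_{n≥1} 1/|λ_n| < ∞. -/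
open MeasureTheory

section AuxLogDeriv
open Complex Metric Filter Topology

lemma aux_logderiv (lam : ℕ → ℂ) (hne : ∀ n, lam n ≠ 0)
    (β₀ : ℝ) (hβ₀ : 0 < β₀)
    (hre : ∀ n, β₀ * ‖lam n‖ ≤ (lam n).re)
    (hsum : Summable fun n => 1 / ‖lam n‖)
    (f : ℂ → ℂ) (hf : ∀ w, f w = ∏' n, (1 + w / lam n))
    (t : ℝ) (ht : 0 < t) :
    ‖deriv f t / f t‖ ≤ (1/β₀) * ∑' n, 1 / ‖lam n‖ := by
  set a : ℕ → ℝ := fun n => ‖lam n‖ with ha_def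
  have ha : ∀ n, 0 < a n := fun n => norm_pos_iff.mpr (hne n)
  -- finitely many n with a n ≤ 4t
  have hev : ∀ᶠ n in atTop, 4*t < a n := by
    have h0 : Tendsto (fun n => 1 / a n) atTop (𝓝 0) := hsum.tendsto_atTop_zero
    have := h0.eventually (gt_mem_nhds (show (0:ℝ) < 1/(4*t) by positivity))
    filter_upwards [this] with n hn
    rw [div_lt_div_iff₀ (ha n) (by positivity)] at hn
    linarith
  obtain ⟨N, hN⟩ := hev.exists_forall_of_atTop
  have hfin : {n : ℕ | a n ≤ 4*t}.Finite := by
    apply (Set.finite_Iio N).subset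
    intro n hn
    by_contra hc
    exact absurd (hN n (not_lt.mp hc)) (not_lt.mpr hn)
  set s₀ : Finset ℕ := hfin.toFinset with hs₀
  set δ : ℝ := (insert t (s₀.image a)).min' (Finset.insert_nonempty _ _) with hδ_def
  have hδt : δ ≤ t := Finset.min'_le _ _ (Finset.mem_insert_self _ _)
  have hδa : ∀ n ∈ s₀, δ ≤ a n := fun n hn =>
    Finset.min'_le _ _ (Finset.mem_insert_of_mem (Finset.mem_image_of_mem a hn))
  have hδpos : 0 < δ := by
    have := Finset.min'_mem (insert t (s₀.image a)) (Finset.insert_nonempty _ _)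
    rw [Finset.mem_insert] at this
    rcases this with h | h
    · rw [← hδ_def] at *; linarith [h ▸ ht]
    · obtain ⟨n, _, hn⟩ := Finset.mem_image.mp h
      rw [← hδ_def, ← hn] at *; exact hn ▸ ha n
  set ρ : ℝ := δ/2 with hρ_def
  have hρpos : 0 < ρ := by positivity
  have hρa : ∀ n, ρ ≤ a n / 2 := by
    intro n
    by_cases hn : n ∈ s₀
    · have := hδa n hn; rw [hρ_def]; linarith
    · have : 4*t < a n := by
        have : n ∉ {n | a n ≤ 4*t} := fun h => hn (by rwa [hs₀, Set.Finite.mem_toFinset])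
        exact not_le.mp this
      rw [hρ_def]; linarith
  have hρt : ρ ≤ t/2 := by rw [hρ_def]; linarith
  set K : Set ℂ := closedBall (t:ℂ) ρ with hK_def
  set D : Set ℂ := ball (t:ℂ) ρ with hD_def
  have hDK : D ⊆ K := ball_subset_closedBall
  have htD : (t:ℂ) ∈ D := mem_ball_self hρpos
  -- real part bound
  have hre2 : ∀ z ∈ K, ∀ n, (1/2:ℝ) ≤ (1 + z / lam n).re := by
    intro z hz n
    have hzt : ‖z - t‖ ≤ ρ := by
      rw [hK_def, mem_closedBall, Complex.dist_eq] at hz; exact hz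
    have hsplit : z / lam n = (t:ℂ) / lam n + (z - t) / lam n := by ring
    have h1 : 0 ≤ ((t:ℂ) / lam n).re := by
      rw [div_eq_mul_inv, Complex.mul_re, Complex.ofReal_re, Complex.ofReal_im,
        Complex.inv_re, Complex.inv_im]
      have hlre : 0 < (lam n).re := lt_of_lt_of_le (mul_pos hβ₀ (ha n)) (hre n)
      have hnsq : 0 ≤ Complex.normSq (lam n) := Complex.normSq_nonneg _
      simp only [zero_mul, sub_zero]
      positivity

    have h2 : -(1/2:ℝ) ≤ ((z - t) / lam n).re := by
      have hb : ‖(z - t) / lam n‖ ≤ 1/2 := by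
        rw [norm_div]
        rw [div_le_iff₀ (ha n)]
        calc ‖z - t‖ ≤ ρ := hzt
        _ ≤ a n / 2 := hρa n
        _ = 1/2 * a n := by ring
      have := neg_abs_le ((z - t) / lam n).re
      have habs := Complex.abs_re_le_norm ((z - t) / lam n)
      nlinarith [abs_nonneg ((z - t) / lam n).re]
    have : (1 + z / lam n).re = 1 + ((t:ℂ)/lam n).re + ((z-t)/lam n).re := by
      rw [hsplit]; simp [Complex.add_re]; ring
    rw [this]; linarith
  have hne2 : ∀ z ∈ K, ∀ n, 1 + z / lam n ≠ 0 := by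
    intro z hz n h0
    have := hre2 z hz n
    rw [h0] at this; simp at this; linarith
  have hslit : ∀ z ∈ K, ∀ n, 1 + z / lam n ∈ Complex.slitPlane := by
    intro z hz n
    exact Complex.mem_slitPlane_iff.mpr (Or.inl (lt_of_lt_of_le (by norm_num) (hre2 z hz n)))
  set L : ℕ → ℂ → ℂ := fun n z => Complex.log (1 + z / lam n) with hL_def
  have hLderiv : ∀ n, ∀ z ∈ K, HasDerivAt (L n) ((z + lam n)⁻¹) z := by
    intro n z hz
    have hinner : HasDerivAt (fun w : ℂ => 1 + w / lam n) (1 / lam n) z :=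
      ((hasDerivAt_id z).div_const (lam n)).const_add 1
    have hlog := (Complex.hasDerivAt_log (hslit z hz n)).comp z hinner
    have heq : (1 + z / lam n)⁻¹ * (1 / lam n) = (z + lam n)⁻¹ := by
      rw [one_div, ← mul_inv_rev]
      congr 1
      field_simp [hne n]
      ring
    rw [← heq]
    exact hlog
  have hLcont : ∀ n, ContinuousOn (L n) K := fun n z hz =>
    ((hLderiv n z hz).continuousAt).continuousWithinAt
  have hbnd : ∀ n, ∃ C, ∀ z ∈ K, ‖L n z‖ ≤ C := fun n =>
    (isCompact_closedBall _ _).exists_bound_of_continuousOn (hLcont n)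
  choose B hB using hbnd
  set u : ℕ → ℝ := fun n => if n ∈ s₀ then B n else 3 * t / a n with hu_def
  have h4t : ∀ n, n ∉ s₀ → 4 * t < a n := by
    intro n hn
    have : n ∉ {n | a n ≤ 4*t} := fun h => hn (by rwa [hs₀, Set.Finite.mem_toFinset])
    exact not_le.mp this
  have hule : ∀ n, ∀ z ∈ K, ‖L n z‖ ≤ u n := by
    intro n z hz
    by_cases hn : n ∈ s₀
    · simp only [hu_def, if_pos hn]; exact hB n z hz
    · simp only [hu_def, if_neg hn]
      have hzabs : ‖z‖ ≤ 3*t/2 := by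
        have h1 : ‖z - t‖ ≤ ρ := by
          rw [hK_def, mem_closedBall, Complex.dist_eq] at hz; exact hz
        calc ‖z‖ = ‖(t:ℂ) + (z - t)‖ := by ring_nf
          _ ≤ ‖(t:ℂ)‖ + ‖z - t‖ := norm_add_le _ _
          _ ≤ t + ρ := by
              rw [Complex.norm_real, Real.norm_eq_abs, abs_of_pos ht]; linarith
          _ ≤ 3*t/2 := by linarith
      have hq : ‖z / lam n‖ ≤ 1/2 := by
        rw [norm_div]
        rw [div_le_iff₀ (ha n)]
        nlinarith [h4t n hn]
      calc ‖L n z‖ ≤ 3/2 * ‖z / lam n‖ := Complex.norm_log_one_add_half_le_self hq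
        _ ≤ 3 * t / a n := by
            rw [norm_div]
            have heq : (3:ℝ)/2 * (‖z‖ / a n) = (3/2 * ‖z‖) / a n := by ring
            rw [heq, div_le_div_iff₀ (ha n) (ha n)]
            nlinarith [h4t n hn, ha n]
  have hv : Summable (fun n => 3 * t / a n) := by
    refine (hsum.mul_left (3*t)).congr fun n => ?_
    rw [mul_one_div]
  have hu_sum : Summable u := by
    rw [← Finset.summable_compl_iff s₀]
    refine (hv.subtype _).congr fun m => ?_
    obtain ⟨n, hn⟩ := m
    exact (if_neg hn).symm
  set S : ℂ → ℂ := fun z => ∑' n, L n z with hS_def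
  have hLdiff : ∀ n, DifferentiableOn ℂ (L n) D := fun n z hz =>
    ((hLderiv n z (hDK hz)).differentiableAt).differentiableWithinAt
  have hSdiff : DifferentiableOn ℂ S D :=
    Complex.differentiableOn_tsum_of_summable_norm hu_sum hLdiff isOpen_ball
      (fun n z hz => hule n z (hDK hz))
  have hSderivsum : HasSum (fun n => deriv (L n) t) (deriv S t) :=
    Complex.hasSum_deriv_of_summable_norm hu_sum hLdiff isOpen_ball
      (fun n z hz => hule n z (hDK hz)) htD
  have hderivLn : ∀ n, deriv (L n) (t:ℂ) = ((t:ℂ) + lam n)⁻¹ := fun n =>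
    (hLderiv n t (hDK htD)).deriv
  simp only [hderivLn] at hSderivsum
  have hfeq : ∀ z ∈ D, f z = Complex.exp (S z) := by
    intro z hz
    have hzK := hDK hz
    have hsm : Summable fun n => L n z :=
      Summable.of_norm_bounded hu_sum (fun n => hule n z hzK)
    have hprod : HasProd (fun n => 1 + z / lam n) (Complex.exp (S z)) := by
      have h1 := hsm.hasSum.cexp
      have h2 : (Complex.exp ∘ fun n => L n z) = fun n => 1 + z / lam n := by
        funext n; exact Complex.exp_log (hne2 z hzK n)
      rwa [h2] at h1
    rw [hf z, hprod.tprod_eq]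
  have hfS : f =ᶠ[nhds (t:ℂ)] fun z => Complex.exp (S z) := by
    filter_upwards [isOpen_ball.mem_nhds htD] with z hz using hfeq z hz
  have hSt : HasDerivAt S (deriv S t) (t:ℂ) :=
    (hSdiff.differentiableAt (isOpen_ball.mem_nhds htD)).hasDerivAt
  have hfderiv : deriv f t = Complex.exp (S t) * deriv S t := by
    rw [hfS.deriv_eq]
    exact (hSt.cexp).deriv
  have hft : f t = Complex.exp (S t) := hfeq _ htD
  have hdiv : deriv f t / f t = deriv S t := by
    rw [hfderiv, hft, mul_div_cancel_left₀ _ (Complex.exp_ne_zero _)]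
  rw [hdiv]
  have hbound : ∀ n, ‖((t:ℂ) + lam n)⁻¹‖ ≤ (1/β₀) * (1 / a n) := by
    intro n
    have hlow : β₀ * a n ≤ ‖(t:ℂ) + lam n‖ := by
      have h1 : ((t:ℂ) + lam n).re ≤ ‖(t:ℂ)+lam n‖ := Complex.re_le_norm _
      have h2 : ((t:ℂ) + lam n).re = t + (lam n).re := by simp
      nlinarith [hre n]
    rw [norm_inv, one_div, one_div, ← mul_inv]
    apply inv_anti₀ (mul_pos hβ₀ (ha n)) hlow
  have hsn : Summable fun n => ‖((t:ℂ) + lam n)⁻¹‖ :=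
    Summable.of_nonneg_of_le (fun n => norm_nonneg _) hbound
      (((hsum.mul_left (1/β₀))).congr fun n => rfl)
  calc ‖deriv S t‖ = ‖∑' n, ((t:ℂ)+lam n)⁻¹‖ := by
        rw [← hSderivsum.tsum_eq]
    _ ≤ ∑' n, ‖((t:ℂ)+lam n)⁻¹‖ := norm_tsum_le_tsum_norm hsn
    _ ≤ ∑' n, (1/β₀) * (1 / a n) := Summable.tsum_le_tsum hbound hsn (hsum.mul_left (1/β₀))
    _ = (1/β₀) * ∑' n, 1 / a n := tsum_mul_left

end AuxLogDeriv

open Filter Topology in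
theorem stmt15 (lam : ℕ → ℂ) (hne : ∀ n, lam n ≠ 0)
    (β₀ : ℝ) (hβ₀ : 0 < β₀) (hβ₁ : β₀ < 1)
    (hre : ∀ n, β₀ * ‖lam n‖ ≤ (lam n).re)
    (hsum : Summable fun n => 1 / ‖lam n‖)
    (f : ℂ → ℂ) (hf : ∀ w, f w = ∏' n, (1 + w / lam n))
    (ν : Measure ℝ) [IsFiniteMeasure ν] (hsupp : ν (Set.Icc (0:ℝ) 1)ᶜ = 0)
    (hrep : ∀ z : ℂ, 0 < z.re →
      deriv f 0 - deriv f z / f z =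
        z * ∫ u in Set.Ioc (0:ℝ) 1, ((u⁻¹ : ℝ) : ℂ) / (((u⁻¹ : ℝ) : ℂ) + z) ∂ν) :
    IntegrableOn (fun u : ℝ => u⁻¹) (Set.Ioc 0 1) ν ∧
      (∫ u in Set.Ioc (0:ℝ) 1, u⁻¹ ∂ν) ≤
        ‖deriv f 0‖ + (1 / β₀) * ∑' n, 1 / ‖lam n‖ := by
  set M : ℝ := ∑' n, 1 / ‖lam n‖ with hM
  set C : ℝ := ‖deriv f 0‖ + (1/β₀) * M with hC
  have hMnn : 0 ≤ M := tsum_nonneg (fun n => by positivity)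
  have hCnn : 0 ≤ C := by positivity
  have stepA : ∀ t : ℝ, 0 < t →
      ∫ u in Set.Ioc (0:ℝ) 1, t * u⁻¹ / (u⁻¹ + t) ∂ν ≤ C := by
    intro t ht
    have h1 := hrep (t:ℂ) (by simpa using ht)
    have h2 : (fun u : ℝ => ((u⁻¹ : ℝ) : ℂ) / (((u⁻¹ : ℝ) : ℂ) + (t:ℂ)))
        = fun u : ℝ => (((u⁻¹ / (u⁻¹ + t) : ℝ)) : ℂ) := by
      funext u; push_cast; ring
    rw [h2] at h1
    have hio : ∫ u in Set.Ioc (0:ℝ) 1, (((u⁻¹ / (u⁻¹ + t) : ℝ)) : ℂ) ∂ν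
        = (((∫ u in Set.Ioc (0:ℝ) 1, u⁻¹ / (u⁻¹ + t) ∂ν : ℝ)) : ℂ) := integral_ofReal
    rw [hio] at h1
    have h3 : deriv f 0 - deriv f (t:ℂ) / f (t:ℂ) =
        (((t * ∫ u in Set.Ioc (0:ℝ) 1, u⁻¹/(u⁻¹+t) ∂ν : ℝ)) : ℂ) := by
      rw [h1]; push_cast; ring
    have h5 : t * ∫ u in Set.Ioc (0:ℝ) 1, u⁻¹/(u⁻¹+t) ∂ν ≤ C := by
      have h4 : t * ∫ u in Set.Ioc (0:ℝ) 1, u⁻¹/(u⁻¹+t) ∂ν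
          = (deriv f 0 - deriv f (t:ℂ) / f (t:ℂ)).re := by rw [h3, Complex.ofReal_re]
      rw [h4]
      calc (deriv f 0 - deriv f (t:ℂ) / f (t:ℂ)).re
          ≤ ‖deriv f 0 - deriv f (t:ℂ) / f (t:ℂ)‖ := Complex.re_le_norm _
        _ ≤ ‖deriv f 0‖ + ‖deriv f (t:ℂ) / f (t:ℂ)‖ := by
            simpa using norm_sub_le (deriv f 0) (deriv f (t:ℂ) / f (t:ℂ))
        _ ≤ C := by
            have := aux_logderiv lam hne β₀ hβ₀ hre hsum f hf t ht
            rw [hC]; linarith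
    calc ∫ u in Set.Ioc (0:ℝ) 1, t * u⁻¹ / (u⁻¹ + t) ∂ν
        = ∫ u in Set.Ioc (0:ℝ) 1, t * (u⁻¹ / (u⁻¹ + t)) ∂ν := by
          congr 1; funext u; ring
      _ = t * ∫ u in Set.Ioc (0:ℝ) 1, u⁻¹ / (u⁻¹ + t) ∂ν := integral_const_mul _ _
      _ ≤ C := h5
  set μ := ν.restrict (Set.Ioc (0:ℝ) 1) with hμ
  have hmem : ∀ᵐ u ∂μ, u ∈ Set.Ioc (0:ℝ) 1 := ae_restrict_mem measurableSet_Ioc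
  set F : ℕ → ℝ → ℝ := fun k u => ((k:ℝ)+1) * u⁻¹ / (u⁻¹ + ((k:ℝ)+1)) with hF
  have hmono : ∀ u ∈ Set.Ioc (0:ℝ) 1, Monotone fun k => F k u := by
    intro u hu j k hjk
    obtain ⟨hu0, hu1⟩ := hu
    have hinv : 0 < u⁻¹ := by positivity
    have hjk' : (j:ℝ) ≤ (k:ℝ) := Nat.cast_le.mpr hjk
    simp only [hF]
    rw [div_le_div_iff₀ (by positivity) (by positivity)]
    nlinarith [mul_pos hinv hinv, mul_le_mul_of_nonneg_right hjk' (mul_pos hinv hinv).le]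
  have htends : ∀ u ∈ Set.Ioc (0:ℝ) 1, Tendsto (fun k => F k u) atTop (𝓝 u⁻¹) := by
    intro u hu
    obtain ⟨hu0, hu1⟩ := hu
    have hne0 : u ≠ 0 := ne_of_gt hu0
    have heq : ∀ k : ℕ, F k u = u⁻¹ - u⁻¹ * u⁻¹ / (u⁻¹ + ((k:ℝ)+1)) := by
      intro k
      have hd : (0:ℝ) < u⁻¹ + ((k:ℝ)+1) := by positivity
      simp only [hF]
      field_simp
      ring
    simp_rw [heq]
    have hd : Tendsto (fun k : ℕ => u⁻¹ + ((k:ℝ)+1)) atTop atTop := by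
      apply tendsto_atTop_add_const_left
      exact tendsto_atTop_add_const_right _ _ tendsto_natCast_atTop_atTop
    have h0 : Tendsto (fun k : ℕ => u⁻¹*u⁻¹ / (u⁻¹ + ((k:ℝ)+1))) atTop (𝓝 0) :=
      Tendsto.div_atTop tendsto_const_nhds hd
    simpa using tendsto_const_nhds.sub h0
  have hFmeas : ∀ k, Measurable (F k) := fun k =>
    (measurable_const.mul measurable_inv).div (measurable_inv.add measurable_const)
  have hFbound : ∀ k, ∀ u ∈ Set.Ioc (0:ℝ) 1, 0 ≤ F k u ∧ F k u ≤ (k:ℝ)+1 := by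
    intro k u hu
    obtain ⟨hu0, hu1⟩ := hu
    have hinv : 0 < u⁻¹ := by positivity
    constructor
    · simp only [hF]; positivity
    · simp only [hF]
      rw [div_le_iff₀ (by positivity)]
      nlinarith
  have hFint : ∀ k, Integrable (F k) μ := by
    intro k
    apply Integrable.mono' (integrable_const ((k:ℝ)+1)) (hFmeas k).aestronglyMeasurable
    filter_upwards [hmem] with u hu
    rw [Real.norm_eq_abs, _root_.abs_of_nonneg (hFbound k u hu).1]
    exact (hFbound k u hu).2
  have hlk : ∀ k, ∫⁻ u, ENNReal.ofReal (F k u) ∂μ ≤ ENNReal.ofReal C := by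
    intro k
    rw [← ofReal_integral_eq_lintegral_ofReal (hFint k)
      (by filter_upwards [hmem] with u hu using (hFbound k u hu).1)]
    exact ENNReal.ofReal_le_ofReal (stepA _ (by positivity))
  have hlim : Tendsto (fun k => ∫⁻ u, ENNReal.ofReal (F k u) ∂μ) atTop
      (𝓝 (∫⁻ u, ENNReal.ofReal u⁻¹ ∂μ)) := by
    apply lintegral_tendsto_of_tendsto_of_monotone
    · exact fun k => (ENNReal.measurable_ofReal.comp (hFmeas k)).aemeasurable
    · filter_upwards [hmem] with u hu j k hjk
      exact ENNReal.ofReal_le_ofReal (hmono u hu hjk)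
    · filter_upwards [hmem] with u hu
      exact (ENNReal.continuous_ofReal.tendsto _).comp (htends u hu)
  have hkey : ∫⁻ u, ENNReal.ofReal u⁻¹ ∂μ ≤ ENNReal.ofReal C :=
    le_of_tendsto hlim (Filter.Eventually.of_forall hlk)
  have hmeas_inv : AEStronglyMeasurable (fun u:ℝ => u⁻¹) μ :=
    measurable_inv.aestronglyMeasurable
  have hfin2 : HasFiniteIntegral (fun u:ℝ => u⁻¹) μ := by
    rw [hasFiniteIntegral_iff_norm]
    have hcongr : ∀ᵐ u ∂μ, ENNReal.ofReal ‖(u:ℝ)⁻¹‖ = ENNReal.ofReal u⁻¹ := by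
      filter_upwards [hmem] with u hu
      rw [Real.norm_eq_abs, _root_.abs_of_nonneg (le_of_lt (inv_pos.mpr hu.1))]
    rw [lintegral_congr_ae hcongr]
    exact lt_of_le_of_lt hkey ENNReal.ofReal_lt_top
  refine ⟨⟨hmeas_inv, hfin2⟩, ?_⟩
  have heq2 : ∫ u in Set.Ioc (0:ℝ) 1, u⁻¹ ∂ν
      = (∫⁻ u, ENNReal.ofReal u⁻¹ ∂μ).toReal := by
    rw [integral_eq_lintegral_of_nonneg_ae
      (by filter_upwards [hmem] with u hu; exact le_of_lt (inv_pos.mpr hu.1)) hmeas_inv]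
  rw [heq2]
  exact ENNReal.toReal_le_of_le_ofReal hCnn hkey
end
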